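/- Let B > 0 and let w, z be complex numbers with w ≠ 0, |log |w|| ≤ B, and |z/w − 1| ≤ 1/2. Then z ≠ 0 and |log |z|| ≤ B + 3/4. In particular, if φ_X is the model characteristic function of a triplet with λ ≤ Λ and σ ≤ Σ, and if sup_{|t| ≤ 1/h} |φ_emp(t) − φ_X(t)| ≤ (1/2) e^{−2Λ − Σ²/(2h²)}, then |log |φ_emp(t)|| ≤ 2Λ + Σ²/(2h²) + 3/4 for all |t| ≤ 1/h, so that the truncation at level M_n in the estimators is inactive once M_n exceeds this bound. -/

import Mathlib

open MeasureTheory ProbabilityTheory Filter Complex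

noncomputable section

/-- Characteristic function (Fourier transform) of a density `f`. -/
def charFun' (f : ℝ → ℝ) (t : ℝ) : ℂ :=
  ∫ x : ℝ, Complex.exp (Complex.I * t * x) * (f x : ℂ)

/-- Model characteristic function of one observation. -/
def phiX (γ σ lam : ℝ) (f : ℝ → ℝ) (t : ℝ) : ℂ :=
  Complex.exp (Complex.I * γ * t - (σ ^ 2 * t ^ 2) / 2 + lam * (charFun' f t - 1))

/-- Empirical characteristic function. -/
def phiEmp {Ω : Type*} {n : ℕ} (X : Fin n → Ω → ℝ) (ω : Ω) (t : ℝ) : ℂ :=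
  (n : ℂ)⁻¹ * ∑ j : Fin n, Complex.exp (Complex.I * t * (X j ω : ℂ))

/-- Bandwidth `h_n = (η log n)^{-1/2}`. -/
def bw (η : ℝ) (n : ℕ) : ℝ := (η * Real.log n) ^ (-(1 / 2) : ℝ)

/-- Truncation `max{min{M, x}, -M}`. -/
def trunc (M x : ℝ) : ℝ := max (min M x) (-M)

open Classical in
/-- Distinguished (continuous) logarithm of `g` on `[-T, T]`, normalized by `L 0 = 0`;
zero if no such continuous logarithm exists. -/
def distLog (g : ℝ → ℂ) (T : ℝ) : ℝ → ℂ :=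
  if h : ∃ L : ℝ → ℂ, ContinuousOn L (Set.Icc (-T) T) ∧ L 0 = 0 ∧
      ∀ t ∈ Set.Icc (-T) T, Complex.exp (L t) = g t
  then h.choose else fun _ => 0

/-- The estimator of `σ²`. -/
def sigmaTilde (η : ℝ) (m : ℕ → ℝ) (v : ℝ → ℝ) {Ω : Type*} {n : ℕ}
    (X : Fin n → Ω → ℝ) (ω : Ω) : ℝ :=
  ∫ t in (-(bw η n)⁻¹)..(bw η n)⁻¹,
    trunc (m n / bw η n ^ 2) (Real.log (‖phiEmp X ω t‖)) *
      (bw η n ^ 3 * v (bw η n * t))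

/-- The estimator of `λ`. -/
def lamTilde (η : ℝ) (m : ℕ → ℝ) (u : ℝ → ℝ) {Ω : Type*} {n : ℕ}
    (X : Fin n → Ω → ℝ) (ω : Ω) : ℝ :=
  ∫ t in (-(bw η n)⁻¹)..(bw η n)⁻¹,
    trunc (m n / bw η n ^ 2) (Real.log (‖phiEmp X ω t‖)) *
      (bw η n * u (bw η n * t))

/-- The estimator of `γ`. -/
def gammaTilde (η : ℝ) (m : ℕ → ℝ) (w : ℝ → ℝ) {Ω : Type*} {n : ℕ}
    (X : Fin n → Ω → ℝ) (ω : Ω) : ℝ :=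
  ∫ t in (-(bw η n)⁻¹)..(bw η n)⁻¹,
    trunc (m n / bw η n ^ 2) ((distLog (phiEmp X ω) (bw η n)⁻¹ t).im) *
      (bw η n ^ 2 * w (bw η n * t))

/-- The estimator of the L\'evy density `ρ`. -/
def rhoHat (η : ℝ) (m : ℕ → ℝ) (v u w : ℝ → ℝ) {Ω : Type*} {n : ℕ}
    (X : Fin n → Ω → ℝ) (ω : Ω) (x : ℝ) : ℂ :=
  (-Complex.I * (gammaTilde η m w X ω : ℝ)) * (2 * Real.pi : ℂ)⁻¹ *
      (∫ t in (-(bw η n)⁻¹)..(bw η n)⁻¹, Complex.exp (-Complex.I * t * x) * (t : ℂ)) +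
    (lamTilde η m u X ω : ℝ) * (2 * Real.pi : ℂ)⁻¹ *
      (∫ t in (-(bw η n)⁻¹)..(bw η n)⁻¹, Complex.exp (-Complex.I * t * x)) +
    ((sigmaTilde η m v X ω : ℝ) / 2) * (2 * Real.pi : ℂ)⁻¹ *
      (∫ t in (-(bw η n)⁻¹)..(bw η n)⁻¹, Complex.exp (-Complex.I * t * x) * (t : ℂ) ^ 2) +
    (2 * Real.pi : ℂ)⁻¹ *
      (∫ t in (-(bw η n)⁻¹)..(bw η n)⁻¹, Complex.exp (-Complex.I * t * x) *
        (trunc (m n / bw η n ^ 2) (Real.log (‖phiEmp X ω t‖)) : ℝ)) +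
    Complex.I * (2 * Real.pi : ℂ)⁻¹ *
      (∫ t in (-(bw η n)⁻¹)..(bw η n)⁻¹, Complex.exp (-Complex.I * t * x) *
        (trunc (m n / bw η n ^ 2) ((distLog (phiEmp X ω) (bw η n)⁻¹ t).im) : ℝ))

end

lemma part1_log_abs (B : ℝ) (w z : ℂ) (hw : w ≠ 0)
    (hlw : |Real.log (‖w‖)| ≤ B)
    (hz : ‖z / w - 1‖ ≤ 1 / 2) :
    z ≠ 0 ∧ |Real.log (‖z‖)| ≤ B + 3 / 4 := by
  have hw0 : (0:ℝ) < ‖w‖ := norm_pos_iff.mpr hw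
  set a : ℝ := ‖z / w‖ with ha
  have htri : |a - 1| ≤ 1 / 2 := by
    have := abs_norm_sub_norm_le (z / w) 1
    rw [ha, norm_div]
    simpa using this.trans hz
  have ha1 : 1/2 ≤ a := by rw [abs_le] at htri; linarith
  have ha2 : a ≤ 3/2 := by rw [abs_le] at htri; linarith
  have haz : ‖z‖ = a * ‖w‖ := by
    rw [ha, norm_div]; field_simp
  have hz0 : z ≠ 0 := by
    intro h
    rw [h, norm_zero] at haz
    nlinarith
  refine ⟨hz0, ?_⟩
  have ha0 : (0:ℝ) < a := by linarith
  have hlog : Real.log (‖z‖) = Real.log a + Real.log (‖w‖) := by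
    rw [haz, Real.log_mul (by linarith) (by linarith)]
  have hla : |Real.log a| ≤ 3/4 := by
    have h2 : Real.log a ≤ Real.log 2 := Real.log_le_log ha0 (by linarith)
    have h3 : -Real.log a ≤ Real.log 2 := by
      rw [← Real.log_inv]
      exact Real.log_le_log (by positivity)
        (by rw [inv_le_comm₀ (by linarith) (by norm_num)]; linarith)
    have := Real.log_two_lt_d9
    rw [abs_le]; constructor <;> linarith
  calc |Real.log (‖z‖)| ≤ |Real.log a| + |Real.log (‖w‖)| := by
        rw [hlog]; exact abs_add_le _ _
    _ ≤ B + 3/4 := by linarith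

theorem log_abs_stability :
    (∀ (B : ℝ) (w z : ℂ), 0 < B → w ≠ 0 → |Real.log (‖w‖)| ≤ B →
      ‖z / w - 1‖ ≤ 1 / 2 →
      z ≠ 0 ∧ |Real.log (‖z‖)| ≤ B + 3 / 4) ∧
    (∀ (γ σ lam Λ Sig h : ℝ) (f : ℝ → ℝ) (n : ℕ) (Ω : Type) (X : Fin n → Ω → ℝ) (ω : Ω),
      0 < σ → σ ≤ Sig → 0 < lam → lam ≤ Λ → 0 < h →
      (∀ x, 0 ≤ f x) → MeasureTheory.Integrable f → (∫ x : ℝ, f x) = 1 →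
      (∀ t : ℝ, |t| ≤ h⁻¹ →
        ‖phiEmp X ω t - phiX γ σ lam f t‖ ≤
          (1 / 2) * Real.exp (-2 * Λ - Sig ^ 2 / (2 * h ^ 2))) →
      ∀ t : ℝ, |t| ≤ h⁻¹ →
        |Real.log (‖phiEmp X ω t‖)| ≤ 2 * Λ + Sig ^ 2 / (2 * h ^ 2) + 3 / 4) := by
  constructor
  · intro B w z _ hw hlw hz
    exact part1_log_abs B w z hw hlw hz
  · intro γ σ lam Λ Sig h f n Ω X ω hσ hss hlam hlamΛ hh hf hfint hfone hsup t ht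
    set B := 2 * Λ + Sig ^ 2 / (2 * h ^ 2) with hBdef
    have hΛ : 0 < Λ := lt_of_lt_of_le hlam hlamΛ
    have hcf : ‖charFun' f t‖ ≤ 1 := by
      calc ‖charFun' f t‖
          ≤ ∫ x : ℝ, ‖Complex.exp (Complex.I * t * x) * (f x : ℂ)‖ :=
            norm_integral_le_integral_norm _
        _ = ∫ x : ℝ, f x := by
            congr 1; funext x
            rw [norm_mul, Complex.norm_exp,
              Complex.norm_real, Real.norm_eq_abs, _root_.abs_of_nonneg (hf x)]
            simp [Complex.mul_re, Complex.mul_im]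
        _ = 1 := hfone
    have hrecf : |(charFun' f t).re| ≤ 1 :=
      (Complex.abs_re_le_norm _).trans hcf
    rw [abs_le] at hrecf
    set c : ℂ := Complex.I * γ * t - (σ ^ 2 * t ^ 2 : ℂ) / 2 + lam * (charFun' f t - 1) with hc
    have hre : c.re = -(σ ^ 2 * t ^ 2) / 2 + lam * ((charFun' f t).re - 1) := by
      simp [hc, Complex.div_re, Complex.normSq, ← Complex.ofReal_pow, Complex.mul_re, Complex.mul_im]
      ring
    have ht2 : t ^ 2 ≤ (h ^ 2)⁻¹ := by
      rw [← _root_.sq_abs t, ← inv_pow]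
      exact pow_le_pow_left₀ (abs_nonneg t) ht 2
    have hσ2 : σ ^ 2 * t ^ 2 / 2 ≤ Sig ^ 2 / (2 * h ^ 2) := by
      have h1 : σ ^ 2 * t ^ 2 ≤ Sig ^ 2 * (h ^ 2)⁻¹ :=
        mul_le_mul (pow_le_pow_left₀ hσ.le hss 2) ht2 (sq_nonneg t) (by positivity)
      have h2 : Sig ^ 2 * (h ^ 2)⁻¹ = Sig ^ 2 / h ^ 2 := by rw [div_eq_mul_inv]
      calc σ ^ 2 * t ^ 2 / 2 ≤ (Sig ^ 2 / h ^ 2) / 2 := by rw [← h2]; linarith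
        _ = Sig ^ 2 / (2 * h ^ 2) := by ring
    have hre_le : c.re ≤ 0 := by
      rw [hre]
      nlinarith [sq_nonneg σ, sq_nonneg t]
    have hre_ge : -B ≤ c.re := by
      rw [hre, hBdef]
      nlinarith [mul_le_mul_of_nonneg_left (by linarith : (-2:ℝ) ≤ (charFun' f t).re - 1) hlam.le]
    have hB : 0 < B := by
      have h0 : 0 ≤ Sig ^ 2 / (2 * h ^ 2) := by positivity
      rw [hBdef]
      linarith
    have hwne : phiX γ σ lam f t ≠ 0 := Complex.exp_ne_zero _
    have habsw : ‖phiX γ σ lam f t‖ = Real.exp c.re := by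
      rw [phiX, Complex.norm_exp]
    have hlw : |Real.log (‖phiX γ σ lam f t‖)| ≤ B := by
      rw [habsw, Real.log_exp, abs_le]
      exact ⟨by linarith, by linarith⟩
    have hexp : Real.exp (-B) ≤ ‖phiX γ σ lam f t‖ := by
      rw [habsw]
      exact Real.exp_le_exp.2 hre_ge
    have hratio : ‖phiEmp X ω t / phiX γ σ lam f t - 1‖ ≤ 1 / 2 := by
      rw [div_sub_one hwne, norm_div, div_le_iff₀ (norm_pos_iff.mpr hwne)]
      calc ‖phiEmp X ω t - phiX γ σ lam f t‖
          ≤ (1 / 2) * Real.exp (-2 * Λ - Sig ^ 2 / (2 * h ^ 2)) := hsup t ht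
        _ = (1 / 2) * Real.exp (-B) := by rw [hBdef]; ring_nf
        _ ≤ 1 / 2 * ‖phiX γ σ lam f t‖ := by linarith
    exact (part1_log_abs B _ _ hwne hlw hratio).2
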